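/- Let f ∈ L²(ℝ) with ‖V_φ f‖_{L¹(ℝ²)} = 1, and let Δ ⊆ ℝ² be measurable with finite Lebesgue measure |Δ| < 1. Then ∫_Δ |V_φ f(x,ω)| dx dω < 1, i.e. the STFT with Gaussian window cannot have all (or at least a 1-fraction) of its L¹ mass concentrated on a set of measure less than 1. -/

import Mathlib

open MeasureTheory Complex

/-- The normalized Gaussian window `φ(t) = 2^{1/4} e^{-πt²}`. -/
noncomputable def gaussWindow (t : ℝ) : ℂ :=
  ((2 : ℝ) ^ ((1 : ℝ) / 4) * Real.exp (-Real.pi * t ^ 2) : ℝ)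

/-- Short-time Fourier transform with Gaussian window. -/
noncomputable def STFT (f : ℝ → ℂ) (x ω : ℝ) : ℂ :=
  ∫ t : ℝ, f t * (starRingEnd ℂ) (gaussWindow (t - x)) *
    Complex.exp (-2 * Real.pi * Complex.I * ω * t)

noncomputable def barg (f : ℝ → ℂ) (z : ℂ) : ℂ :=
  ∫ t : ℝ, f t * Complex.exp (-(Real.pi : ℂ) * (t : ℂ) ^ 2 + 2 * (Real.pi : ℂ) * (t : ℂ) * z)

noncomputable def Ff (f : ℝ → ℂ) (z : ℂ) : ℂ :=
  (((2 : ℝ) ^ ((1 : ℝ) / 4) : ℝ) : ℂ) * Complex.exp (-(Real.pi : ℂ) * z ^ 2 / 2) * barg f z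

noncomputable def uF (f : ℝ → ℂ) (z : ℂ) : ℝ :=
  Real.exp (-Real.pi * Complex.normSq z / 2) * ‖Ff f z‖

lemma stft_eq (f : ℝ → ℂ) (x ω : ℝ) :
    STFT f x ω = Complex.exp (-(Real.pi : ℂ) * ((x : ℂ) ^ 2 + (ω : ℂ) ^ 2) / 2
        - (Real.pi : ℂ) * x * ω * Complex.I) * Ff f ((x : ℂ) - (ω : ℂ) * Complex.I) := by
  set z : ℂ := (x : ℂ) - (ω : ℂ) * Complex.I with hzdef
  set E : ℂ := -(Real.pi : ℂ) * ((x : ℂ) ^ 2 + (ω : ℂ) ^ 2) / 2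
        - (Real.pi : ℂ) * x * ω * Complex.I with hEdef
  set c : ℂ := (((2 : ℝ) ^ ((1 : ℝ) / 4) : ℝ) : ℂ) with hcdef
  rw [STFT, Ff]
  rw [show Complex.exp E * (c * Complex.exp (-(Real.pi : ℂ) * z ^ 2 / 2) * barg f z)
      = (Complex.exp E * (c * Complex.exp (-(Real.pi : ℂ) * z ^ 2 / 2))) * barg f z by ring]
  rw [barg, ← integral_const_mul]
  refine congrArg (integral volume) (funext fun t => ?_)
  have h1 : (starRingEnd ℂ) (gaussWindow (t - x)) =
      c * Complex.exp ((-Real.pi * (t - x) ^ 2 : ℝ) : ℂ) := by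
    rw [gaussWindow, Complex.conj_ofReal, Complex.ofReal_mul, Complex.ofReal_exp]
  rw [h1]
  have key : ((-Real.pi * (t - x) ^ 2 : ℝ) : ℂ) + -2 * Real.pi * Complex.I * ω * t =
      E + (-(Real.pi : ℂ) * z ^ 2 / 2 + (-(Real.pi : ℂ) * (t : ℂ) ^ 2
        + 2 * (Real.pi : ℂ) * (t : ℂ) * z)) := by
    rw [hzdef, hEdef]
    push_cast
    linear_combination ((Real.pi : ℂ) * (ω : ℂ) ^ 2 / 2) * Complex.I_sq
  calc f t * (c * Complex.exp ((-Real.pi * (t - x) ^ 2 : ℝ) : ℂ)) *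
        Complex.exp (-2 * Real.pi * Complex.I * ω * t)
      = c * Complex.exp (((-Real.pi * (t - x) ^ 2 : ℝ) : ℂ) + -2 * Real.pi * Complex.I * ω * t)
          * f t := by rw [Complex.exp_add]; ring
    _ = c * Complex.exp (E + (-(Real.pi : ℂ) * z ^ 2 / 2 + (-(Real.pi : ℂ) * (t : ℂ) ^ 2
          + 2 * (Real.pi : ℂ) * (t : ℂ) * z))) * f t := by rw [key]
    _ = Complex.exp E * (c * Complex.exp (-(Real.pi : ℂ) * z ^ 2 / 2)) *
          (f t * Complex.exp (-(Real.pi : ℂ) * (t : ℂ) ^ 2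
            + 2 * (Real.pi : ℂ) * (t : ℂ) * z)) := by
        rw [Complex.exp_add, Complex.exp_add]; ring

lemma stft_abs (f : ℝ → ℂ) (x ω : ℝ) :
    ‖STFT f x ω‖ = uF f ((x : ℂ) - (ω : ℂ) * Complex.I) := by
  rw [stft_eq, norm_mul, uF, Complex.norm_exp]
  congr 2
  · simp [Complex.normSq_apply, ← Complex.ofReal_pow]
    ring


lemma integrable_norm_mul {f : ℝ → ℂ} (hf : MeasureTheory.MemLp f 2 (volume : Measure ℝ))
    {g : ℝ → ℝ} (hg : Continuous g) (hgsq : Integrable (fun t => g t ^ 2)) :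
    Integrable (fun t => ‖f t‖ * g t) := by
  have hfsq : Integrable (fun t => ‖f t‖ ^ 2) :=
    (memLp_two_iff_integrable_sq_norm hf.aestronglyMeasurable).mp hf
  have hmeas : AEStronglyMeasurable (fun t => ‖f t‖ * g t) volume :=
    hf.aestronglyMeasurable.norm.mul hg.aestronglyMeasurable
  refine Integrable.mono' (((hfsq.add hgsq).div_const 2)) hmeas ?_
  filter_upwards with t
  rw [Real.norm_eq_abs, abs_mul, abs_norm]
  simp only [Pi.add_apply]
  nlinarith [_root_.sq_abs (g t), sq_nonneg (‖f t‖ - |g t|), abs_nonneg (g t), norm_nonneg (f t)]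

/-- Gaussian-type weights are square integrable. -/
lemma integrable_sq_weight (c : ℝ) (hc : 0 ≤ c) :
    Integrable (fun t : ℝ => (2 * Real.pi * |t| * Real.exp (-Real.pi * t ^ 2 + 2 * Real.pi * c * |t|)) ^ 2) := by
  have hmaj : Integrable (fun t : ℝ =>
      (4 * Real.pi ^ 2 * Real.exp (4 * Real.pi * c ^ 2)) * (t ^ 2 * Real.exp (-Real.pi * t ^ 2))) := by
    refine Integrable.const_mul ?_ _
    have h := integrable_rpow_mul_exp_neg_mul_sq (b := Real.pi) Real.pi_pos
      (s := 2) (by norm_num)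
    convert h using 2 with t
    rw [Real.rpow_two]
  refine Integrable.mono' hmaj ?_ ?_
  · exact Continuous.aestronglyMeasurable (by fun_prop)
  · filter_upwards with t
    have h1 : 4 * Real.pi * c * |t| ≤ Real.pi * t ^ 2 + 4 * Real.pi * c ^ 2 := by
      nlinarith [sq_nonneg (|t| - 2 * c), _root_.sq_abs t, Real.pi_pos, abs_nonneg t]
    have h2 : (2 * Real.pi * |t| * Real.exp (-Real.pi * t ^ 2 + 2 * Real.pi * c * |t|)) ^ 2
        = 4 * Real.pi ^ 2 * t ^ 2 * Real.exp (-2 * Real.pi * t ^ 2 + 4 * Real.pi * c * |t|) := by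
      rw [mul_pow, mul_pow, ← Real.exp_nat_mul, _root_.sq_abs]
      ring_nf
    rw [Real.norm_eq_abs, _root_.abs_of_nonneg (by positivity), h2]
    rw [show (-2 * Real.pi * t ^ 2 + 4 * Real.pi * c * |t|)
        = (-Real.pi * t ^ 2) + (4 * Real.pi * c * |t| - Real.pi * t ^ 2) by ring, Real.exp_add]
    have h3 : Real.exp (4 * Real.pi * c * |t| - Real.pi * t ^ 2) ≤ Real.exp (4 * Real.pi * c ^ 2) :=
      Real.exp_le_exp.2 (by linarith)
    calc 4 * Real.pi ^ 2 * t ^ 2 * (Real.exp (-Real.pi * t ^ 2) * Real.exp (4 * Real.pi * c * |t| - Real.pi * t ^ 2))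
        ≤ 4 * Real.pi ^ 2 * t ^ 2 * (Real.exp (-Real.pi * t ^ 2) * Real.exp (4 * Real.pi * c ^ 2)) := by
          have : (0:ℝ) ≤ 4 * Real.pi ^ 2 * t ^ 2 * Real.exp (-Real.pi * t ^ 2) := by positivity
          nlinarith [Real.exp_pos (-Real.pi * t ^ 2), Real.exp_pos (4 * Real.pi * c * |t| - Real.pi * t ^ 2)]
      _ = 4 * Real.pi ^ 2 * Real.exp (4 * Real.pi * c ^ 2) * (t ^ 2 * Real.exp (-Real.pi * t ^ 2)) := by ring




lemma integrable_sq_weight' (c : ℝ) (hc : 0 ≤ c) :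
    Integrable (fun t : ℝ => (Real.exp (-Real.pi * t ^ 2 + 2 * Real.pi * c * |t|)) ^ 2) := by
  refine Integrable.mono' ((integrable_exp_neg_mul_sq Real.pi_pos).const_mul
    (Real.exp (4 * Real.pi * c ^ 2))) (Continuous.aestronglyMeasurable (by fun_prop)) ?_
  filter_upwards with t
  rw [Real.norm_eq_abs, _root_.abs_of_nonneg (by positivity), ← Real.exp_nat_mul, ← Real.exp_add]
  apply Real.exp_le_exp.2
  push_cast
  nlinarith [sq_nonneg (|t| - 2 * c), _root_.sq_abs t, Real.pi_pos]

/-- real part of the exponent -/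
lemma exp_re_eq (t : ℝ) (z : ℂ) :
    (-(Real.pi : ℂ) * (t : ℂ) ^ 2 + 2 * (Real.pi : ℂ) * (t : ℂ) * z).re
      = -Real.pi * t ^ 2 + 2 * Real.pi * t * z.re := by
  have h : (-(Real.pi : ℂ) * (t : ℂ) ^ 2 + 2 * (Real.pi : ℂ) * (t : ℂ) * z)
      = ((-Real.pi * t ^ 2 : ℝ) : ℂ) + ((2 * Real.pi * t : ℝ) : ℂ) * z := by push_cast; ring
  rw [h, Complex.add_re, Complex.ofReal_re, Complex.re_ofReal_mul]

lemma barg_differentiable {f : ℝ → ℂ} (hf : MeasureTheory.MemLp f 2 (volume : Measure ℝ)) :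
    Differentiable ℂ (barg f) := by
  intro z₀
  set c : ℝ := |z₀.re| + 1 with hc
  have hc0 : (0 : ℝ) ≤ c := by positivity
  have hrebound : ∀ z ∈ Metric.ball z₀ 1, ∀ t : ℝ, t * z.re ≤ |t| * c := by
    intro z hz t
    have h1 : |z.re - z₀.re| ≤ ‖z - z₀‖ := by
      simpa [Complex.sub_re] using Complex.abs_re_le_norm (z - z₀)
    have h2 : ‖z - z₀‖ < 1 := by
      simpa [Complex.dist_eq] using Metric.mem_ball.mp hz
    have h3 : |z.re| ≤ c := by
      rw [hc]
      have := abs_sub_abs_le_abs_sub z.re z₀.re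
      linarith [abs_sub_comm z.re z₀.re ▸ h1]
    calc t * z.re ≤ |t * z.re| := le_abs_self _
      _ = |t| * |z.re| := abs_mul _ _
      _ ≤ |t| * c := by nlinarith [abs_nonneg t]
  have hF_int : ∀ z ∈ Metric.ball z₀ 1,
      Integrable (fun t : ℝ => f t * Complex.exp (-(Real.pi : ℂ) * (t : ℂ) ^ 2
        + 2 * (Real.pi : ℂ) * (t : ℂ) * z)) := by
    intro z hz
    refine Integrable.mono' (integrable_norm_mul hf (g := fun t =>
        Real.exp (-Real.pi * t ^ 2 + 2 * Real.pi * c * |t|)) (by fun_prop)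
        (integrable_sq_weight' c hc0))
      (hf.aestronglyMeasurable.mul (Continuous.aestronglyMeasurable (by fun_prop))) ?_
    filter_upwards with t
    simp only [norm_mul, Complex.norm_exp, exp_re_eq]
    apply mul_le_mul_of_nonneg_left _ (norm_nonneg (f t))
    apply Real.exp_le_exp.2
    have := hrebound z hz t
    nlinarith [Real.pi_pos]
  have key := hasDerivAt_integral_of_dominated_loc_of_deriv_le (μ := volume)
    (F := fun z t => f t * Complex.exp (-(Real.pi : ℂ) * (t : ℂ) ^ 2
      + 2 * (Real.pi : ℂ) * (t : ℂ) * z))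
    (F' := fun z t => f t * (Complex.exp (-(Real.pi : ℂ) * (t : ℂ) ^ 2
      + 2 * (Real.pi : ℂ) * (t : ℂ) * z) * (2 * (Real.pi : ℂ) * (t : ℂ))))
    (x₀ := z₀)
    (bound := fun t => ‖f t‖ * (2 * Real.pi * |t| * Real.exp (-Real.pi * t ^ 2
      + 2 * Real.pi * c * |t|)))
    (s := Metric.ball z₀ 1) (Metric.ball_mem_nhds z₀ one_pos) ?_ (hF_int z₀ (Metric.mem_ball_self one_pos)) ?_ ?_ ?_ ?_
  · exact key.2.differentiableAt
  · filter_upwards with z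
    exact hf.aestronglyMeasurable.mul (Continuous.aestronglyMeasurable (by fun_prop))
  · exact hf.aestronglyMeasurable.mul (Continuous.aestronglyMeasurable (by fun_prop))
  · filter_upwards with t
    intro z hz
    simp only [norm_mul, Complex.norm_exp, exp_re_eq]
    rw [show ‖(2 : ℂ)‖ * ‖(Real.pi : ℂ)‖ * ‖(t : ℂ)‖ = 2 * Real.pi * |t|
      by simp [Complex.norm_real, Complex.norm_two, _root_.abs_of_nonneg Real.pi_pos.le]]
    apply mul_le_mul_of_nonneg_left _ (norm_nonneg (f t))
    rw [mul_comm (Real.exp _) (2 * Real.pi * |t|)]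
    apply mul_le_mul_of_nonneg_left _ (by positivity)
    apply Real.exp_le_exp.2
    have := hrebound z hz t
    nlinarith [Real.pi_pos]
  · exact integrable_norm_mul hf (by fun_prop) (integrable_sq_weight c hc0)
  · filter_upwards with t
    intro z _
    have h0 : HasDerivAt (fun w : ℂ => 2 * (Real.pi : ℂ) * (t : ℂ) * w)
        (2 * (Real.pi : ℂ) * (t : ℂ)) z := by
      simpa using (hasDerivAt_id z).const_mul (2 * (Real.pi : ℂ) * (t : ℂ))
    have h1 : HasDerivAt (fun z : ℂ => -(Real.pi : ℂ) * (t : ℂ) ^ 2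
        + 2 * (Real.pi : ℂ) * (t : ℂ) * z) (2 * (Real.pi : ℂ) * (t : ℂ)) z :=
      HasDerivAt.const_add (-(Real.pi : ℂ) * (t : ℂ) ^ 2) h0
    exact (h1.cexp).const_mul (f t)

lemma Ff_differentiable {f : ℝ → ℂ} (hf : MeasureTheory.MemLp f 2 (volume : Measure ℝ)) :
    Differentiable ℂ (Ff f) := by
  have h1 : Differentiable ℂ (fun z : ℂ => Complex.exp (-(Real.pi : ℂ) * z ^ 2 / 2)) := by
    apply Differentiable.cexp
    exact (((differentiable_pow 2).const_mul _).div_const _)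
  exact ((differentiable_const _).mul h1).mul (barg_differentiable hf)

lemma uF_nonneg (f : ℝ → ℂ) (z : ℂ) : 0 ≤ uF f z :=
  mul_nonneg (Real.exp_pos _).le (norm_nonneg _)

lemma meanvalue {G : ℂ → ℂ} (hG : Differentiable ℂ G) (c : ℂ) {R : ℝ} (hR : 0 < R) :
    2 * Real.pi * ‖G c‖ ≤ ∫ θ in (0 : ℝ)..2 * Real.pi,
      ‖G (circleMap c R θ)‖ := by
  have hd : DiffContOnCl ℂ G (Metric.ball c R) :=
    hG.diffContOnCl
  have key := hd.circleIntegral_sub_inv_smul (Metric.mem_ball_self hR)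
  have h2 : (∮ z in C(c, R), (z - c)⁻¹ • G z)
      = ∫ θ in (0 : ℝ)..2 * Real.pi, Complex.I * G (circleMap c R θ) := by
    rw [circleIntegral]
    apply intervalIntegral.integral_congr
    intro θ _
    simp only [deriv_circleMap, circleMap_sub_center, smul_eq_mul]
    have hne : circleMap 0 R θ ≠ 0 := by
      simpa using circleMap_ne_center (c := 0) (θ := θ) hR.ne'
    field_simp
  have h4 : (2 * (Real.pi : ℂ) * Complex.I) • G c
      = Complex.I * ∫ θ in (0 : ℝ)..2 * Real.pi, G (circleMap c R θ) := by
    rw [← key, h2, intervalIntegral.integral_const_mul]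
  have h5 : 2 * Real.pi * ‖G c‖
      = ‖(2 * (Real.pi : ℂ) * Complex.I) • G c‖ := by
    rw [smul_eq_mul, norm_mul]
    simp [Complex.norm_real, _root_.abs_of_pos Real.pi_pos]
  rw [h5, h4, norm_mul, Complex.norm_I, one_mul]
  refine le_trans (intervalIntegral.norm_integral_le_integral_norm
    (by positivity : (0:ℝ) ≤ 2 * Real.pi)) (le_of_eq ?_)
  rfl





lemma circle_bound {f : ℝ → ℂ} (hf : MeasureTheory.MemLp f 2 (volume : Measure ℝ))
    (z₀ : ℂ) {r : ℝ} (hr : 0 < r) :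
    2 * Real.pi * Real.exp (-Real.pi * r ^ 2 / 2) * uF f z₀ ≤
      ∫ θ in (0 : ℝ)..2 * Real.pi, uF f (z₀ + circleMap 0 r θ) := by
  set G : ℂ → ℂ := fun w => Ff f (z₀ + w) * Complex.exp (-(Real.pi : ℂ) * w * (starRingEnd ℂ) z₀)
    with hGdef
  have hGdiff : Differentiable ℂ G := by
    refine Differentiable.mul ?_ (Differentiable.cexp ?_)
    · exact (Ff_differentiable hf).comp (differentiable_id.const_add z₀)
    · exact (differentiable_id.const_mul _).mul_const _
  have hmv := meanvalue hGdiff 0 hr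
  have hG0 : G 0 = Ff f z₀ := by simp [hGdef]
  set a : ℝ := Real.exp (-Real.pi * Complex.normSq z₀ / 2 - Real.pi * r ^ 2 / 2) with hadef
  have ha : (0 : ℝ) < a := Real.exp_pos _
  have hpt : ∀ θ : ℝ, a * ‖G (circleMap 0 r θ)‖ = uF f (z₀ + circleMap 0 r θ) := by
    intro θ
    set w : ℂ := circleMap 0 r θ with hwdef
    have hw2 : w.re ^ 2 + w.im ^ 2 = r ^ 2 := by
      have h1 : Complex.normSq w = r ^ 2 := by
        rw [← Complex.sq_norm, hwdef, norm_circleMap_zero, _root_.sq_abs]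
      rw [← h1, Complex.normSq_apply]; ring
    have e1 : a * ‖G w‖
        = ‖Ff f (z₀ + w)‖ * (a * Real.exp ((-(Real.pi : ℂ) * w
          * (starRingEnd ℂ) z₀).re)) := by
      simp only [hGdef, norm_mul, Complex.norm_exp]; ring
    have e2 : a * Real.exp ((-(Real.pi : ℂ) * w * (starRingEnd ℂ) z₀).re)
        = Real.exp (-Real.pi * Complex.normSq (z₀ + w) / 2) := by
      rw [hadef, ← Real.exp_add]
      congr 1
      simp only [Complex.normSq_apply, Complex.mul_re, Complex.add_re, Complex.add_im,
        Complex.neg_re, Complex.neg_im, Complex.conj_re, Complex.conj_im, Complex.mul_im,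
        Complex.ofReal_re, Complex.ofReal_im]
      linear_combination (Real.pi / 2) * hw2
    rw [uF, e1, e2]; ring
  calc 2 * Real.pi * Real.exp (-Real.pi * r ^ 2 / 2) * uF f z₀
      = a * (2 * Real.pi * ‖G 0‖) := by
        rw [hG0, uF, hadef, show -Real.pi * Complex.normSq z₀ / 2 - Real.pi * r ^ 2 / 2
          = -Real.pi * r ^ 2 / 2 + -Real.pi * Complex.normSq z₀ / 2 by ring, Real.exp_add]
        ring
    _ ≤ a * ∫ θ in (0 : ℝ)..2 * Real.pi, ‖G (circleMap 0 r θ)‖ :=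
        mul_le_mul_of_nonneg_left hmv ha.le
    _ = ∫ θ in (0 : ℝ)..2 * Real.pi, a * ‖G (circleMap 0 r θ)‖ :=
        (intervalIntegral.integral_const_mul _ _).symm
    _ = ∫ θ in (0 : ℝ)..2 * Real.pi, uF f (z₀ + circleMap 0 r θ) :=
        intervalIntegral.integral_congr fun θ _ => hpt θ

lemma lintegral_comp_polarCoord_symm' (g : ℝ × ℝ → ENNReal) :
    (∫⁻ p in polarCoord.target, ENNReal.ofReal p.1 * g (polarCoord.symm p)) = ∫⁻ p, g p := by
  exact _root_.lintegral_comp_polarCoord_symm g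

lemma Complex.lintegral_comp_polarCoord_symm' (g : ℂ → ENNReal) :
    (∫⁻ p in polarCoord.target, ENNReal.ofReal p.1 * g (Complex.polarCoord.symm p)) =
      ∫⁻ z, g z := by
  rw [← (Complex.volume_preserving_equiv_real_prod.symm).lintegral_comp_emb
    Complex.measurableEquivRealProd.symm.measurableEmbedding,
    ← _root_.lintegral_comp_polarCoord_symm']
  rfl

lemma radial_integral_real :
    (∫ r in Set.Ioi (0 : ℝ), 2 * Real.pi * r * Real.exp (-Real.pi * r ^ 2 / 2)) = 2 := by
  have hderiv : ∀ r ∈ Set.Ioi (0 : ℝ), HasDerivAt (fun s : ℝ => -2 * Real.exp (-Real.pi * s ^ 2 / 2))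
      (2 * Real.pi * r * Real.exp (-Real.pi * r ^ 2 / 2)) r := by
    intro r _
    have h1 : HasDerivAt (fun s : ℝ => -Real.pi * s ^ 2 / 2) (-Real.pi * r) r := by
      have := ((hasDerivAt_pow 2 r).const_mul (-Real.pi)).div_const 2
      refine this.congr_deriv ?_
      push_cast; ring
    have h2 := (h1.exp).const_mul (-2 : ℝ)
    refine h2.congr_deriv ?_
    ring
  have hint : IntegrableOn (fun r : ℝ => 2 * Real.pi * r * Real.exp (-Real.pi * r ^ 2 / 2))
      (Set.Ioi 0) := by
    have h := (integrable_mul_exp_neg_mul_sq (b := Real.pi / 2) (by positivity)).const_mul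
      (2 * Real.pi)
    refine (h.congr ?_).integrableOn
    filter_upwards with r
    rw [show -Real.pi * r ^ 2 / 2 = -(Real.pi / 2) * r ^ 2 by ring]
    ring
  have htend : Filter.Tendsto (fun s : ℝ => -2 * Real.exp (-Real.pi * s ^ 2 / 2))
      Filter.atTop (nhds 0) := by
    have h1 : Filter.Tendsto (fun s : ℝ => Real.pi * s ^ 2 / 2) Filter.atTop Filter.atTop := by
      apply Filter.Tendsto.atTop_div_const (by norm_num)
      exact (Filter.tendsto_pow_atTop (two_ne_zero)).const_mul_atTop Real.pi_pos
    have h2 := Real.tendsto_exp_neg_atTop_nhds_zero.comp h1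
    have h3 : (fun s : ℝ => Real.exp (-Real.pi * s ^ 2 / 2))
        = (fun x : ℝ => Real.exp (-x)) ∘ fun s : ℝ => Real.pi * s ^ 2 / 2 := by
      funext s; simp [Function.comp]; ring_nf
    rw [show (0:ℝ) = -2 * 0 by ring]
    exact (Filter.Tendsto.const_mul (-2 : ℝ) (h3 ▸ h2))
  have := integral_Ioi_of_hasDerivAt_of_tendsto
    (f := fun s : ℝ => -2 * Real.exp (-Real.pi * s ^ 2 / 2))
    (Continuous.continuousWithinAt (by fun_prop))
    hderiv hint htend
  rw [this]
  norm_num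

lemma radial_integral :
    (∫⁻ r in Set.Ioi (0 : ℝ),
      ENNReal.ofReal (2 * Real.pi * r * Real.exp (-Real.pi * r ^ 2 / 2))) = ENNReal.ofReal 2 := by
  have hh : ENNReal.ofReal (∫ r in Set.Ioi (0:ℝ), 2 * Real.pi * r * Real.exp (-Real.pi * r ^ 2 / 2))
      = ∫⁻ r in Set.Ioi (0 : ℝ),
        ENNReal.ofReal (2 * Real.pi * r * Real.exp (-Real.pi * r ^ 2 / 2)) := by
    refine ofReal_integral_eq_lintegral_ofReal ?_ ?_
    · have h := (integrable_mul_exp_neg_mul_sq (b := Real.pi / 2) (by positivity)).const_mul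
        (2 * Real.pi)
      refine (h.congr ?_).integrableOn
      filter_upwards with r
      rw [show -Real.pi * r ^ 2 / 2 = -(Real.pi / 2) * r ^ 2 by ring]
      ring
    · refine (ae_restrict_iff' measurableSet_Ioi).2 (ae_of_all _ fun r hr => ?_)
      have : (0:ℝ) < r := hr
      positivity
  rw [radial_integral_real] at hh
  exact hh.symm











lemma uF_le_half {f : ℝ → ℂ} (hf : MeasureTheory.MemLp f 2 (volume : Measure ℝ))
    (hV1 : Integrable (fun p : ℝ × ℝ => STFT f p.1 p.2))
    (hVnorm : (∫ p : ℝ × ℝ, ‖STFT f p.1 p.2‖) = 1) (z₀ : ℂ) :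
    uF f z₀ ≤ 1 / 2 := by
  have hucont : Continuous (uF f) := by
    have h := (Ff_differentiable hf).continuous
    exact (Real.continuous_exp.comp
      ((continuous_const.mul Complex.continuous_normSq).div_const 2)).mul
      (continuous_norm.comp h)
  have hUmeas : Measurable (fun z : ℂ => ENNReal.ofReal (uF f z)) :=
    hucont.measurable.ennreal_ofReal
  -- Step A : total mass is 1
  have hWint : Integrable (fun p : ℝ × ℝ => ‖STFT f p.1 p.2‖) := by
    simpa using hV1.norm
  have hA : (∫⁻ z : ℂ, ENNReal.ofReal (uF f z)) = 1 := by
    have h1 : ENNReal.ofReal (∫ p : ℝ × ℝ, ‖STFT f p.1 p.2‖)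
        = ∫⁻ p : ℝ × ℝ, ENNReal.ofReal (‖STFT f p.1 p.2‖) :=
      ofReal_integral_eq_lintegral_ofReal hWint (ae_of_all _ fun p => norm_nonneg _)
    rw [hVnorm, ENNReal.ofReal_one] at h1
    have hmp : MeasurePreserving (fun p : ℝ × ℝ => (p.1 : ℂ) - (p.2 : ℂ) * Complex.I)
        volume volume := by
      have h2 : MeasurePreserving (fun p : ℝ × ℝ => (p.1, -p.2)) volume volume :=
        (MeasurePreserving.id volume).prod (Measure.measurePreserving_neg volume)
      have h3a : MeasurePreserving (⇑Complex.measurableEquivRealProd.symm) volume volume :=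
        Complex.volume_preserving_equiv_real_prod.symm
      have h3 := h3a.comp h2
      have h4 : (fun p : ℝ × ℝ => (p.1 : ℂ) - (p.2 : ℂ) * Complex.I)
          = (Complex.measurableEquivRealProd.symm ∘ fun p : ℝ × ℝ => (p.1, -p.2)) := by
        funext p
        apply Complex.ext <;>
          simp [Complex.measurableEquivRealProd, Complex.equivRealProd_symm_apply]
      rw [h4]; exact h3
    have h5 := hmp.lintegral_comp (f := fun z : ℂ => ENNReal.ofReal (uF f z)) hUmeas
    calc (∫⁻ z : ℂ, ENNReal.ofReal (uF f z))
        = ∫⁻ p : ℝ × ℝ, ENNReal.ofReal (uF f ((p.1 : ℂ) - (p.2 : ℂ) * Complex.I)) := h5.symm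
      _ = ∫⁻ p : ℝ × ℝ, ENNReal.ofReal (‖STFT f p.1 p.2‖) := by
          refine lintegral_congr fun p => ?_
          rw [stft_abs]
      _ = 1 := h1.symm
  -- Step B : translate and pass to polar coordinates
  have hpolar : (∫⁻ p in polarCoord.target,
      ENNReal.ofReal p.1 * ENNReal.ofReal (uF f (z₀ + Complex.polarCoord.symm p))) = 1 := by
    rw [Complex.lintegral_comp_polarCoord_symm' (fun w => ENNReal.ofReal (uF f (z₀ + w)))]
    rw [(measurePreserving_add_left volume z₀).lintegral_comp
      (f := fun z : ℂ => ENNReal.ofReal (uF f z)) hUmeas]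
    exact hA
  -- continuity of polar symm
  have hsymm_cont : Continuous (fun p : ℝ × ℝ => Complex.polarCoord.symm p) := by
    have : (fun p : ℝ × ℝ => Complex.polarCoord.symm p)
        = fun p : ℝ × ℝ => (p.1 : ℂ) * (Real.cos p.2 + Real.sin p.2 * Complex.I) := by
      funext p; rw [Complex.polarCoord_symm_apply]
    rw [this]; fun_prop
  have hh_meas : Measurable (fun p : ℝ × ℝ =>
      ENNReal.ofReal p.1 * ENNReal.ofReal (uF f (z₀ + Complex.polarCoord.symm p))) := by
    exact (measurable_fst.ennreal_ofReal).mul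
      ((hucont.measurable.comp (measurable_const.add hsymm_cont.measurable)).ennreal_ofReal)
  -- Step C : iterate
  have htarget : polarCoord.target = Set.Ioi (0 : ℝ) ×ˢ Set.Ioo (-Real.pi) Real.pi := rfl
  have hiter : (∫⁻ p in polarCoord.target,
      ENNReal.ofReal p.1 * ENNReal.ofReal (uF f (z₀ + Complex.polarCoord.symm p)))
      = ∫⁻ r in Set.Ioi (0 : ℝ), ∫⁻ θ in Set.Ioo (-Real.pi) Real.pi,
          ENNReal.ofReal r * ENNReal.ofReal (uF f (z₀ + Complex.polarCoord.symm (r, θ))) := by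
    rw [htarget, Measure.volume_eq_prod, ← Measure.prod_restrict]
    exact lintegral_prod _ hh_meas.aemeasurable
  -- per-radius bound
  have hper_r : ∀ r ∈ Set.Ioi (0 : ℝ),
      ENNReal.ofReal (2 * Real.pi * r * Real.exp (-Real.pi * r ^ 2 / 2)) *
        ENNReal.ofReal (uF f z₀)
      ≤ ∫⁻ θ in Set.Ioo (-Real.pi) Real.pi,
          ENNReal.ofReal r * ENNReal.ofReal (uF f (z₀ + Complex.polarCoord.symm (r, θ))) := by
    intro r hr
    have hr0 : (0 : ℝ) < r := hr
    -- circleMap matches polar coordinates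
    have hcm : ∀ θ : ℝ, Complex.polarCoord.symm (r, θ) = circleMap 0 r θ := by
      intro θ
      rw [Complex.polarCoord_symm_apply, circleMap_zero, Complex.exp_mul_I]
      push_cast
      ring
    -- interval integral over (-π, π) equals over (0, 2π)
    have hper : Function.Periodic (fun θ : ℝ => uF f (z₀ + circleMap 0 r θ)) (2 * Real.pi) := by
      intro θ
      simp only
      rw [periodic_circleMap 0 r θ]
    have hshift : (∫ θ in (-Real.pi)..Real.pi, uF f (z₀ + circleMap 0 r θ))
        = ∫ θ in (0 : ℝ)..2 * Real.pi, uF f (z₀ + circleMap 0 r θ) := by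
      have h := hper.intervalIntegral_add_eq (-Real.pi) 0
      rw [show -Real.pi + 2 * Real.pi = Real.pi by ring] at h
      rw [show (0:ℝ) + 2 * Real.pi = 2 * Real.pi by ring] at h
      exact h
    -- continuity & integrability on the interval
    have hcont2 : Continuous (fun θ : ℝ => uF f (z₀ + circleMap 0 r θ)) :=
      hucont.comp (continuous_const.add (continuous_circleMap 0 r))
    have hIntOn : IntegrableOn (fun θ : ℝ => uF f (z₀ + circleMap 0 r θ))
        (Set.Ioo (-Real.pi) Real.pi) := by
      exact (hcont2.integrableOn_Icc (a := -Real.pi) (b := Real.pi)).mono_set Set.Ioo_subset_Icc_self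
    -- lower bound on the real integral
    have hlow : 2 * Real.pi * Real.exp (-Real.pi * r ^ 2 / 2) * uF f z₀
        ≤ ∫ θ in Set.Ioo (-Real.pi) Real.pi, uF f (z₀ + circleMap 0 r θ) := by
      have h1 := circle_bound hf z₀ hr0
      rw [← hshift] at h1
      have h2 : (∫ θ in (-Real.pi)..Real.pi, uF f (z₀ + circleMap 0 r θ))
          = ∫ θ in Set.Ioo (-Real.pi) Real.pi, uF f (z₀ + circleMap 0 r θ) := by
        rw [intervalIntegral.integral_of_le (by linarith [Real.pi_pos]),
          integral_Ioc_eq_integral_Ioo]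
      rw [← h2]; exact h1
    -- convert to lintegral
    have h3 : ENNReal.ofReal (∫ θ in Set.Ioo (-Real.pi) Real.pi, uF f (z₀ + circleMap 0 r θ))
        = ∫⁻ θ in Set.Ioo (-Real.pi) Real.pi, ENNReal.ofReal (uF f (z₀ + circleMap 0 r θ)) :=
      ofReal_integral_eq_lintegral_ofReal hIntOn (ae_of_all _ fun θ => uF_nonneg f _)
    calc ENNReal.ofReal (2 * Real.pi * r * Real.exp (-Real.pi * r ^ 2 / 2)) *
          ENNReal.ofReal (uF f z₀)
        = ENNReal.ofReal r * ENNReal.ofReal (2 * Real.pi * Real.exp (-Real.pi * r ^ 2 / 2)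
            * uF f z₀) := by
          rw [← ENNReal.ofReal_mul hr0.le, ← ENNReal.ofReal_mul (by positivity)]
          ring_nf
      _ ≤ ENNReal.ofReal r * ENNReal.ofReal
            (∫ θ in Set.Ioo (-Real.pi) Real.pi, uF f (z₀ + circleMap 0 r θ)) := by
          exact mul_le_mul_right (ENNReal.ofReal_le_ofReal hlow) _
      _ = ENNReal.ofReal r * ∫⁻ θ in Set.Ioo (-Real.pi) Real.pi,
            ENNReal.ofReal (uF f (z₀ + circleMap 0 r θ)) := by rw [h3]
      _ = ∫⁻ θ in Set.Ioo (-Real.pi) Real.pi,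
            ENNReal.ofReal r * ENNReal.ofReal (uF f (z₀ + circleMap 0 r θ)) := by
          refine (lintegral_const_mul _ ?_).symm
          exact Measurable.ennreal_ofReal (hucont.measurable.comp
            (measurable_const.add (continuous_circleMap 0 r).measurable))
      _ = ∫⁻ θ in Set.Ioo (-Real.pi) Real.pi,
            ENNReal.ofReal r * ENNReal.ofReal (uF f (z₀ + Complex.polarCoord.symm (r, θ))) := by
          refine lintegral_congr fun θ => ?_
          rw [hcm θ]
  -- integrate the per-radius bound
  have hmain : ENNReal.ofReal 2 * ENNReal.ofReal (uF f z₀) ≤ 1 := by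
    calc ENNReal.ofReal 2 * ENNReal.ofReal (uF f z₀)
        = (∫⁻ r in Set.Ioi (0 : ℝ),
            ENNReal.ofReal (2 * Real.pi * r * Real.exp (-Real.pi * r ^ 2 / 2))) *
            ENNReal.ofReal (uF f z₀) := by rw [radial_integral]
      _ = ∫⁻ r in Set.Ioi (0 : ℝ),
            ENNReal.ofReal (2 * Real.pi * r * Real.exp (-Real.pi * r ^ 2 / 2)) *
            ENNReal.ofReal (uF f z₀) := by
          refine (lintegral_mul_const _ ?_).symm
          exact Measurable.ennreal_ofReal (by fun_prop)
      _ ≤ ∫⁻ r in Set.Ioi (0 : ℝ), ∫⁻ θ in Set.Ioo (-Real.pi) Real.pi,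
            ENNReal.ofReal r * ENNReal.ofReal (uF f (z₀ + Complex.polarCoord.symm (r, θ))) := by
          exact lintegral_mono_ae ((ae_restrict_iff' measurableSet_Ioi).2 (ae_of_all _ hper_r))
      _ = 1 := by rw [← hiter]; exact hpolar
  have : (2 : ℝ) * uF f z₀ ≤ 1 := by
    rw [← ENNReal.ofReal_mul (by norm_num : (0:ℝ) ≤ 2)] at hmain
    exact ENNReal.ofReal_le_one.mp hmain
  linarith

/-- L¹ uncertainty principle for the STFT (ε = 0 case of Corollary 3): if
`‖V_φ f‖_{L¹(ℝ²)} = 1` and `|Δ| < 1`, then `∫_Δ |V_φ f| < 1`. -/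
theorem stft_uncertainty_small_sets (f : ℝ → ℂ)
    (hf : MeasureTheory.MemLp f 2 (volume : Measure ℝ))
    (hV1 : Integrable (fun p : ℝ × ℝ => STFT f p.1 p.2))
    (hVnorm : (∫ p : ℝ × ℝ, ‖STFT f p.1 p.2‖) = 1)
    (Δ : Set (ℝ × ℝ)) (hΔ : MeasurableSet Δ) (hΔmeas : volume Δ < 1) :
    ∫ p in Δ, ‖STFT f p.1 p.2‖ < 1 := by
  have hW : Integrable (fun p : ℝ × ℝ => ‖STFT f p.1 p.2‖) := by
    simpa using hV1.norm
  have hhalf : ∀ p : ℝ × ℝ, ‖STFT f p.1 p.2‖ ≤ 1 / 2 := by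
    intro p
    rw [stft_abs f p.1 p.2]
    exact uF_le_half hf hV1 hVnorm _
  have hfin : volume Δ ≠ ⊤ := (hΔmeas.trans (by norm_num)).ne
  have h1 : ∫ p in Δ, ‖STFT f p.1 p.2‖ ≤ ∫ _p in Δ, (1 / 2 : ℝ) := by
    refine setIntegral_mono_on hW.integrableOn ?_ hΔ fun p _ => hhalf p
    exact integrableOn_const hfin
  have h2 : (∫ _p in Δ, (1 / 2 : ℝ)) = (volume Δ).toReal * (1 / 2) := by
    simp [setIntegral_const, smul_eq_mul, Measure.real]
  have h3 : (volume Δ).toReal ≤ 1 := by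
    have := ENNReal.toReal_mono (by norm_num : (1 : ENNReal) ≠ ⊤) hΔmeas.le
    simpa using this
  calc ∫ p in Δ, ‖STFT f p.1 p.2‖ ≤ (volume Δ).toReal * (1 / 2) := h1.trans h2.le
    _ ≤ 1 * (1 / 2) := by nlinarith [ENNReal.toReal_nonneg (a := volume Δ)]
    _ < 1 := by norm_num
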